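/- Let G be a real symmetric nondegenerate 4×4 matrix such that every 3×3 principal submatrix G_{\hat i} (obtained by deleting the i-th row and column) has inertia (1,2), and set σ := −sgn(det G) ∈ {+1,−1}. Then: (a) In(G) = In(η_σ); (b) there exist linearly independent N₁,N₂,N₃,N₄ ∈ ℝ⁴ with ⟪N_i,N_j⟫ = G_{ij}, and vectors V₁,V₂,V₃,V₄ ∈ ℝ⁴ with ⟪V_i,V_i⟫ = σ, ⟪V_i,N_j⟫ = 0 for all j ≠ i, and ⟪V_i,N_i⟫ < 0 for all i; (c) for any such data, {X ∈ ℝ⁴ : ⟪X,N_i⟫ ≤ 0 for all i} = {Σ_i λ_i V_i : λ_i ≥ 0}; (d) any two quadruples (N_i) and (N_i′) as in (b) are related by N_i′ = Λ N_i for a single Λ with Λᵀ η_σ Λ = η_σ. -/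

import Mathlib

open Matrix

noncomputable section

/-- Ambient metric: `η_{+1} = diag(-1,1,1,1)`, `η_{-1} = diag(-1,-1,1,1)`. -/
def eta (σ : ℝ) : Matrix (Fin 4) (Fin 4) ℝ := Matrix.diagonal ![-1, σ, 1, 1]

/-- Ambient bilinear form `⟪X,Y⟫ = Xᵀ η_σ Y`. -/
def ip (σ : ℝ) (X Y : Fin 4 → ℝ) : ℝ := X ⬝ᵥ (eta σ *ᵥ Y)

/-- Inertia `In(G) = (n₋(G), n₊(G))`: the numbers of negative and positive eigenvalues of a
real symmetric matrix, counted with multiplicity. -/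
def inertia {n : ℕ} (G : Matrix (Fin n) (Fin n) ℝ) : ℕ × ℕ :=
  if hG : G.IsHermitian then
    ((Finset.univ.filter fun i => hG.eigenvalues i < 0).card,
     (Finset.univ.filter fun i => 0 < hG.eigenvalues i).card)
  else (0, 0)

lemma real_spectral {n : ℕ} (A : Matrix (Fin n) (Fin n) ℝ) (hA : A.IsHermitian) :
    ∃ U : Matrix (Fin n) (Fin n) ℝ, U * Uᵀ = 1 ∧ Uᵀ * U = 1 ∧
      A = U * diagonal hA.eigenvalues * Uᵀ := by
  have hstar : star (hA.eigenvectorUnitary : Matrix (Fin n) (Fin n) ℝ)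
      = (hA.eigenvectorUnitary : Matrix (Fin n) (Fin n) ℝ)ᵀ := by
    rw [Matrix.star_eq_conjTranspose, Matrix.conjTranspose_eq_transpose_of_trivial]
  refine ⟨(hA.eigenvectorUnitary : Matrix (Fin n) (Fin n) ℝ), ?_, ?_, ?_⟩
  · rw [← hstar]; exact (Matrix.mem_unitaryGroup_iff).mp hA.eigenvectorUnitary.2
  · rw [← hstar]; exact (Matrix.mem_unitaryGroup_iff').mp hA.eigenvectorUnitary.2
  · have := hA.spectral_theorem
    rw [Unitary.conjStarAlgAut_apply, hstar] at this
    simpa using this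


lemma quad_eq {n : ℕ} (U : Matrix (Fin n) (Fin n) ℝ) (d : Fin n → ℝ)
    (x : Fin n → ℝ) :
    x ⬝ᵥ ((U * diagonal d * Uᵀ) *ᵥ x) = ∑ m, d m * ((Uᵀ *ᵥ x) m)^2 := by
  rw [← Matrix.mulVec_mulVec, ← Matrix.mulVec_mulVec, Matrix.dotProduct_mulVec]
  rw [show x ᵥ* U = Uᵀ *ᵥ x from by rw [← Matrix.vecMul_transpose, Matrix.transpose_transpose]]
  rw [dotProduct]
  refine Finset.sum_congr rfl fun m _ => ?_
  rw [Matrix.mulVec_diagonal]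
  ring


/-- If the quadratic form of `A` is positive definite on the span of `k` vectors
(in the strong sense below), then `A` has at least `k` positive eigenvalues. -/
lemma le_card_pos {n k : ℕ} (A : Matrix (Fin n) (Fin n) ℝ) (hA : A.IsHermitian)
    (v : Fin k → (Fin n → ℝ))
    (hpos : ∀ c : Fin k → ℝ, c ≠ 0 → 0 < (∑ i, c i • v i) ⬝ᵥ (A *ᵥ (∑ i, c i • v i))) :
    k ≤ (Finset.univ.filter fun i => 0 < hA.eigenvalues i).card := by
  obtain ⟨U, hUUt, hUtU, hAeq⟩ := real_spectral A hA
  by_contra hlt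
  push_neg at hlt
  set P := (Finset.univ.filter fun i => 0 < hA.eigenvalues i) with hP
  -- linear map to the positive coordinates
  let L1 : (Fin k → ℝ) →ₗ[ℝ] (Fin n → ℝ) :=
    { toFun := fun c => ∑ i, c i • v i
      map_add' := by intro a b; simp [add_smul, Finset.sum_add_distrib]
      map_smul' := by intro r a; simp [smul_smul, Finset.smul_sum] }
  let L2 : (Fin n → ℝ) →ₗ[ℝ] (Fin n → ℝ) := Matrix.mulVecLin Uᵀ
  let L3 : (Fin n → ℝ) →ₗ[ℝ] ({x // x ∈ P} → ℝ) := LinearMap.funLeft ℝ ℝ Subtype.val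
  let f := L3.comp (L2.comp L1)
  have hnotinj : ¬ Function.Injective f := by
    intro hinj
    have := LinearMap.finrank_le_finrank_of_injective hinj
    simp only [Module.finrank_pi, Fintype.card_fin] at this
    rw [Fintype.card_coe] at this
    omega
  rw [Function.not_injective_iff] at hnotinj
  obtain ⟨a, b, hab, hne⟩ := hnotinj
  set c := a - b with hc
  have hcne : c ≠ 0 := sub_ne_zero.mpr hne
  have hfc : f c = 0 := by rw [hc, map_sub, hab, sub_self]
  have hq := hpos c hcne
  set x := ∑ i, c i • v i with hx
  have hxval : x ⬝ᵥ (A *ᵥ x) = ∑ m, hA.eigenvalues m * ((Uᵀ *ᵥ x) m)^2 := by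
    conv_lhs => rw [hAeq]
    exact quad_eq U _ x
  have hzero : ∀ m ∈ P, hA.eigenvalues m * ((Uᵀ *ᵥ x) m)^2 = 0 := by
    intro m hm
    have : (Uᵀ *ᵥ x) m = 0 := congrFun hfc ⟨m, hm⟩
    rw [this]; ring
  have hnonpos : x ⬝ᵥ (A *ᵥ x) ≤ 0 := by
    rw [hxval]
    apply Finset.sum_nonpos
    intro m _
    by_cases hm : m ∈ P
    · exact le_of_eq (hzero m hm)
    · have : ¬ 0 < hA.eigenvalues m := by simpa [hP] using hm
      push_neg at this
      exact mul_nonpos_of_nonpos_of_nonneg this (sq_nonneg _)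
  linarith


lemma le_card_neg {n k : ℕ} (A : Matrix (Fin n) (Fin n) ℝ) (hA : A.IsHermitian)
    (v : Fin k → (Fin n → ℝ))
    (hneg : ∀ c : Fin k → ℝ, c ≠ 0 → (∑ i, c i • v i) ⬝ᵥ (A *ᵥ (∑ i, c i • v i)) < 0) :
    k ≤ (Finset.univ.filter fun i => hA.eigenvalues i < 0).card := by
  obtain ⟨U, hUUt, hUtU, hAeq⟩ := real_spectral A hA
  by_contra hlt
  push_neg at hlt
  set P := (Finset.univ.filter fun i => hA.eigenvalues i < 0) with hP
  let L1 : (Fin k → ℝ) →ₗ[ℝ] (Fin n → ℝ) :=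
    { toFun := fun c => ∑ i, c i • v i
      map_add' := by intro a b; simp [add_smul, Finset.sum_add_distrib]
      map_smul' := by intro r a; simp [smul_smul, Finset.smul_sum] }
  let L2 : (Fin n → ℝ) →ₗ[ℝ] (Fin n → ℝ) := Matrix.mulVecLin Uᵀ
  let L3 : (Fin n → ℝ) →ₗ[ℝ] ({x // x ∈ P} → ℝ) := LinearMap.funLeft ℝ ℝ Subtype.val
  let f := L3.comp (L2.comp L1)
  have hnotinj : ¬ Function.Injective f := by
    intro hinj
    have := LinearMap.finrank_le_finrank_of_injective hinj
    simp only [Module.finrank_pi, Fintype.card_fin] at this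
    rw [Fintype.card_coe] at this
    omega
  rw [Function.not_injective_iff] at hnotinj
  obtain ⟨a, b, hab, hne⟩ := hnotinj
  set c := a - b with hc
  have hcne : c ≠ 0 := sub_ne_zero.mpr hne
  have hfc : f c = 0 := by rw [hc, map_sub, hab, sub_self]
  have hq := hneg c hcne
  set x := ∑ i, c i • v i with hx
  have hxval : x ⬝ᵥ (A *ᵥ x) = ∑ m, hA.eigenvalues m * ((Uᵀ *ᵥ x) m)^2 := by
    conv_lhs => rw [hAeq]
    exact quad_eq U _ x
  have hnonneg : 0 ≤ x ⬝ᵥ (A *ᵥ x) := by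
    rw [hxval]
    apply Finset.sum_nonneg
    intro m _
    by_cases hm : m ∈ P
    · have : (Uᵀ *ᵥ x) m = 0 := congrFun hfc ⟨m, hm⟩
      rw [this]; simp
    · have : ¬ hA.eigenvalues m < 0 := by simpa [hP] using hm
      push_neg at this
      exact mul_nonneg this (sq_nonneg _)
  linarith

/-- Columns of the orthogonal matrix give vectors on which the quadratic form of `A` is the
diagonal form of its eigenvalues. -/
lemma exists_spanning {n : ℕ} (A : Matrix (Fin n) (Fin n) ℝ) (hA : A.IsHermitian) :
    ∃ w : Fin n → (Fin n → ℝ), ∀ c : Fin n → ℝ,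
      (∑ i, c i • w i) ⬝ᵥ (A *ᵥ (∑ i, c i • w i)) = ∑ m, hA.eigenvalues m * (c m)^2 := by
  obtain ⟨U, hUUt, hUtU, hAeq⟩ := real_spectral A hA
  refine ⟨fun i => fun j => U j i, fun c => ?_⟩
  have hsum : (∑ i, c i • (fun j => U j i)) = U *ᵥ c := by
    funext j
    simp [Matrix.mulVec, dotProduct, mul_comm]
  rw [hsum]
  conv_lhs => rw [hAeq]
  rw [quad_eq]
  have : Uᵀ *ᵥ (U *ᵥ c) = c := by
    rw [Matrix.mulVec_mulVec, hUtU, Matrix.one_mulVec]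
  rw [this]


/-- Insertion of a zero coordinate, as a linear map. -/
def insLin {n : ℕ} (i : Fin (n+1)) : (Fin n → ℝ) →ₗ[ℝ] (Fin (n+1) → ℝ) where
  toFun x := i.insertNth 0 x
  map_add' a b := by
    funext k
    refine Fin.succAboveCases i ?_ (fun j => ?_) k <;> simp
  map_smul' r a := by
    funext k
    refine Fin.succAboveCases i ?_ (fun j => ?_) k <;> simp

lemma insLin_apply {n : ℕ} (i : Fin (n+1)) (x : Fin n → ℝ) :
    insLin i x = i.insertNth 0 x := rfl

lemma quad_insert {n : ℕ} (A : Matrix (Fin (n+1)) (Fin (n+1)) ℝ) (i : Fin (n+1))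
    (x : Fin n → ℝ) :
    (i.insertNth 0 x) ⬝ᵥ (A *ᵥ i.insertNth 0 x)
      = x ⬝ᵥ ((A.submatrix i.succAbove i.succAbove) *ᵥ x) := by
  have inner : ∀ k, (A *ᵥ i.insertNth 0 x) k = ∑ j, A k (i.succAbove j) * x j := by
    intro k
    rw [Matrix.mulVec, dotProduct, Fin.sum_univ_succAbove _ i]
    simp
  rw [dotProduct, Fin.sum_univ_succAbove _ i]
  simp only [Fin.insertNth_apply_same, Fin.insertNth_apply_succAbove, zero_mul, zero_add, inner]
  rw [dotProduct]
  simp [Matrix.mulVec, dotProduct, Matrix.submatrix_apply]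


/-- Vectors for a sign-definite subspace of `A` coming from eigenvalue data of a matrix `M`
and a quadratic-form embedding. -/
lemma sign_vecs {n N : ℕ} (M : Matrix (Fin n) (Fin n) ℝ) (hM : M.IsHermitian)
    (A : Matrix (Fin N) (Fin N) ℝ) (T : (Fin n → ℝ) →ₗ[ℝ] (Fin N → ℝ))
    (hT : ∀ x, (T x) ⬝ᵥ (A *ᵥ T x) = x ⬝ᵥ (M *ᵥ x))
    (s : ℝ) {k : ℕ}
    (hcard : (Finset.univ.filter fun m => 0 < s * hM.eigenvalues m).card = k) :
    ∃ v : Fin k → (Fin N → ℝ), ∀ c : Fin k → ℝ, c ≠ 0 →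
      0 < s * ((∑ j, c j • v j) ⬝ᵥ (A *ᵥ (∑ j, c j • v j))) := by
  classical
  obtain ⟨w, hw⟩ := exists_spanning M hM
  set P := (Finset.univ.filter fun m => 0 < s * hM.eigenvalues m) with hP
  let e : Fin k ≃ {m // m ∈ P} := (Finset.equivFinOfCardEq hcard).symm
  refine ⟨fun j => T (w (e j)), fun c hc => ?_⟩
  set c' : Fin n → ℝ := fun m => if h : m ∈ P then c (e.symm ⟨m, h⟩) else 0 with hc'
  have hsum1 : (∑ j, c j • w ((e j : Fin n))) = ∑ m, c' m • w m := by
    have hstep1 : ∑ m, c' m • w m = ∑ m ∈ P, c' m • w m :=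
      (Finset.sum_subset (Finset.subset_univ P)
        (fun m _ hm => by simp only [hc', dif_neg hm, zero_smul])).symm
    have hstep2 : ∑ m ∈ P, c' m • w m = ∑ p : {m // m ∈ P}, c' (p : Fin n) • w (p : Fin n) :=
      Finset.sum_subtype P (fun x => Iff.rfl) _
    have hstep3 : ∑ p : {m // m ∈ P}, c' (p : Fin n) • w (p : Fin n)
        = ∑ j, c j • w ((e j : Fin n)) := by
      refine (Fintype.sum_equiv e _ _ fun j => ?_).symm
      have h2 : (e j : Fin n) ∈ P := (e j).2
      simp only [hc', dif_pos h2]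
      congr 2
      rw [show (⟨(e j : Fin n), h2⟩ : {m // m ∈ P}) = e j from Subtype.ext rfl,
        Equiv.symm_apply_apply]
    rw [hstep1, hstep2, hstep3]
  have hTsum : (∑ j, c j • T (w (e j))) = T (∑ j, c j • w (e j)) := by
    rw [map_sum]; simp only [_root_.map_smul]
  rw [hTsum, hT, hsum1, hw]
  rw [Finset.mul_sum]
  apply Finset.sum_pos'
  · intro m _
    by_cases hm : m ∈ P
    · have h1 : 0 < s * hM.eigenvalues m := by simpa [hP] using hm
      have := sq_nonneg (c' m)
      nlinarith
    · have : c' m = 0 := by simp only [hc', dif_neg hm]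
      rw [this]; simp
  · obtain ⟨j, hj⟩ := Function.ne_iff.mp hc
    simp only [Pi.zero_apply] at hj
    refine ⟨(e j : Fin n), Finset.mem_univ _, ?_⟩
    have h2 : (e j : Fin n) ∈ P := (e j).2
    have h1 : 0 < s * hM.eigenvalues (e j) := by
      exact (Finset.mem_filter.mp h2).2
    have hcc : c' (e j : Fin n) = c j := by
      simp only [hc', dif_pos h2]
      congr 1
      rw [show (⟨(e j : Fin n), h2⟩ : {m // m ∈ P}) = e j from Subtype.ext rfl,
        Equiv.symm_apply_apply]
    rw [hcc]
    have h4 : 0 < (c j)^2 := by rcases lt_or_gt_of_ne hj with h|h <;> nlinarith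
    nlinarith


lemma prod_neg_sign {α : Type*} (s : Finset α) (f : α → ℝ) (h : ∀ m ∈ s, f m < 0) :
    0 < (-1)^s.card * ∏ m ∈ s, f m := by
  classical
  induction s using Finset.induction_on with
  | empty => simp
  | insert a s' hnot ih =>
    rw [Finset.prod_insert hnot, Finset.card_insert_of_notMem hnot]
    have hfa : f a < 0 := h a (Finset.mem_insert_self a s')
    have hih := ih (fun m hm => h m (Finset.mem_insert_of_mem hm))
    rw [pow_succ]
    nlinarith

lemma eig_ne_of_det_ne {n : ℕ} (A : Matrix (Fin n) (Fin n) ℝ) (hA : A.IsHermitian)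
    (hdet : A.det ≠ 0) : ∀ i, hA.eigenvalues i ≠ 0 := by
  intro i hi
  apply hdet
  have := hA.det_eq_prod_eigenvalues
  rw [this]
  rw [show (Finset.univ : Finset (Fin n)) = Finset.univ from rfl]
  refine Finset.prod_eq_zero (Finset.mem_univ i) ?_
  simpa using hi

lemma eig_ne_of_card {n : ℕ} (A : Matrix (Fin n) (Fin n) ℝ) (hA : A.IsHermitian)
    (hcard : (Finset.univ.filter fun i => hA.eigenvalues i < 0).card
      + (Finset.univ.filter fun i => 0 < hA.eigenvalues i).card = n) :
    ∀ i, hA.eigenvalues i ≠ 0 := by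
  classical
  intro i hi
  set sn := (Finset.univ.filter fun i => hA.eigenvalues i < 0)
  set sp := (Finset.univ.filter fun i => 0 < hA.eigenvalues i)
  have hdisj : Disjoint sn sp := by
    rw [Finset.disjoint_left]
    intro a ha hb
    have h1 := (Finset.mem_filter.mp ha).2
    have h2 := (Finset.mem_filter.mp hb).2
    linarith
  have huniv : sn ∪ sp = Finset.univ := by
    apply Finset.eq_univ_of_card
    rw [Finset.card_union_of_disjoint hdisj, hcard, Fintype.card_fin]
  have : i ∈ sn ∪ sp := huniv ▸ Finset.mem_univ i
  rcases Finset.mem_union.mp this with h | h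
  · have := (Finset.mem_filter.mp h).2; linarith
  · have := (Finset.mem_filter.mp h).2; linarith

lemma det_sign_lemma {n : ℕ} (A : Matrix (Fin n) (Fin n) ℝ) (hA : A.IsHermitian)
    (hnz : ∀ i, hA.eigenvalues i ≠ 0) :
    (Finset.univ.filter fun i => hA.eigenvalues i < 0).card
      + (Finset.univ.filter fun i => 0 < hA.eigenvalues i).card = n ∧
    ((Finset.univ.filter fun i => hA.eigenvalues i < 0).card % 2 = 0 → 0 < A.det) ∧
    ((Finset.univ.filter fun i => hA.eigenvalues i < 0).card % 2 = 1 → A.det < 0) := by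
  classical
  set sn := (Finset.univ.filter fun i => hA.eigenvalues i < 0) with hsn
  have hfilter : (Finset.univ.filter fun i => ¬ hA.eigenvalues i < 0)
      = (Finset.univ.filter fun i => 0 < hA.eigenvalues i) := by
    apply Finset.filter_congr
    intro i _
    constructor
    · intro h; push_neg at h; exact lt_of_le_of_ne h (Ne.symm (hnz i))
    · intro h; simp only [not_lt]; linarith
  have hdet : A.det = (∏ m ∈ sn, hA.eigenvalues m)
      * ∏ m ∈ (Finset.univ.filter fun i => 0 < hA.eigenvalues i), hA.eigenvalues m := by
    have h1 : A.det = ∏ i, hA.eigenvalues i := by simpa using hA.det_eq_prod_eigenvalues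
    rw [h1, ← Finset.prod_filter_mul_prod_filter_not Finset.univ
      (fun i => hA.eigenvalues i < 0) hA.eigenvalues, hfilter]
  have hppos : 0 < ∏ m ∈ (Finset.univ.filter fun i => 0 < hA.eigenvalues i), hA.eigenvalues m :=
    Finset.prod_pos (fun i hi => (Finset.mem_filter.mp hi).2)
  have hpneg := prod_neg_sign sn hA.eigenvalues (fun m hm => (Finset.mem_filter.mp hm).2)
  refine ⟨?_, ?_, ?_⟩
  · have h2 := Finset.card_filter_add_card_filter_not
      (s := (Finset.univ : Finset (Fin n))) (p := fun i => hA.eigenvalues i < 0)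
    rw [hfilter] at h2
    simpa using h2
  · intro hpar
    have : ((-1 : ℝ))^sn.card = 1 := Even.neg_one_pow (Nat.even_iff.mpr hpar)
    rw [this, one_mul] at hpneg
    rw [hdet]
    exact mul_pos hpneg hppos
  · intro hpar
    have : ((-1 : ℝ))^sn.card = -1 := Odd.neg_one_pow (Nat.odd_iff.mpr hpar)
    rw [this] at hpneg
    have : ∏ m ∈ sn, hA.eigenvalues m < 0 := by linarith
    rw [hdet]
    exact mul_neg_of_neg_of_pos this hppos


/-- The key inertia computation for `G`. -/
lemma inertia_G (G : Matrix (Fin 4) (Fin 4) ℝ) (hGH : G.IsHermitian) (hdet : G.det ≠ 0)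
    (hmin : ∀ i : Fin 4, inertia (G.submatrix i.succAbove i.succAbove) = (1, 2)) :
    (G.det < 0 → inertia G = (1, 3)) ∧ (0 < G.det → inertia G = (2, 2)) := by
  classical
  set i0 : Fin 4 := 0
  set M := G.submatrix i0.succAbove i0.succAbove with hM
  have hMH : M.IsHermitian := hGH.submatrix _
  have hmin0 := hmin i0
  rw [show (G.submatrix i0.succAbove i0.succAbove) = M from rfl] at hmin0
  rw [inertia, dif_pos hMH] at hmin0
  have hminneg : (Finset.univ.filter fun m => hMH.eigenvalues m < 0).card = 1 :=
    (Prod.mk.injEq _ _ _ _).mp hmin0 |>.1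
  have hminpos : (Finset.univ.filter fun m => 0 < hMH.eigenvalues m).card = 2 :=
    (Prod.mk.injEq _ _ _ _).mp hmin0 |>.2
  -- embedding of the quadratic form
  have hT : ∀ x : Fin 3 → ℝ, ((insLin i0) x) ⬝ᵥ (G *ᵥ (insLin i0) x) = x ⬝ᵥ (M *ᵥ x) := by
    intro x
    rw [insLin_apply]
    exact quad_insert G i0 x
  -- positive vectors (s = 1)
  have hcardp : (Finset.univ.filter fun m => 0 < (1:ℝ) * hMH.eigenvalues m).card = 2 := by
    rw [Finset.filter_congr (fun m _ => by rw [one_mul] : ∀ m ∈ Finset.univ,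
      ((0 < (1:ℝ) * hMH.eigenvalues m) ↔ (0 < hMH.eigenvalues m)))]
    exact hminpos
  obtain ⟨v2, hv2⟩ := sign_vecs M hMH G (insLin i0) hT 1 hcardp
  have hcardn : (Finset.univ.filter fun m => 0 < (-1:ℝ) * hMH.eigenvalues m).card = 1 := by
    rw [Finset.filter_congr (fun m _ => by constructor <;> intro h <;> nlinarith : ∀ m ∈ Finset.univ,
      ((0 < (-1:ℝ) * hMH.eigenvalues m) ↔ (hMH.eigenvalues m < 0)))]
    exact hminneg
  obtain ⟨v1, hv1⟩ := sign_vecs M hMH G (insLin i0) hT (-1) hcardn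
  have hcp : 2 ≤ (Finset.univ.filter fun i => 0 < hGH.eigenvalues i).card := by
    apply le_card_pos G hGH v2
    intro c hc
    have := hv2 c hc
    linarith
  have hcn : 1 ≤ (Finset.univ.filter fun i => hGH.eigenvalues i < 0).card := by
    apply le_card_neg G hGH v1
    intro c hc
    have := hv1 c hc
    linarith
  obtain ⟨hsum, hev, hodd⟩ := det_sign_lemma G hGH (eig_ne_of_det_ne G hGH hdet)
  set cn := (Finset.univ.filter fun i => hGH.eigenvalues i < 0).card
  set cp := (Finset.univ.filter fun i => 0 < hGH.eigenvalues i).card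
  have hiner : inertia G = (cn, cp) := by rw [inertia, dif_pos hGH]
  constructor
  · intro hdlt
    have h1 : cn % 2 ≠ 0 := fun h => absurd (hev h) (by linarith)
    have : cn = 1 := by omega
    rw [hiner, this]
    have : cp = 3 := by omega
    rw [this]
  · intro hdgt
    have h1 : cn % 2 ≠ 1 := fun h => absurd (hodd h) (by linarith)
    have : cn = 2 := by omega
    rw [hiner, this]
    have : cp = 2 := by omega
    rw [this]


lemma eta_isHermitian (σ : ℝ) : (eta σ).IsHermitian := by
  rw [Matrix.IsHermitian, Matrix.conjTranspose_eq_transpose_of_trivial]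
  exact (Matrix.isSymm_diagonal _)

lemma quad_eta (σ : ℝ) (x : Fin 4 → ℝ) :
    x ⬝ᵥ (eta σ *ᵥ x) = -(x 0)^2 + σ*(x 1)^2 + (x 2)^2 + (x 3)^2 := by
  simp only [eta, dotProduct, Matrix.mulVec_diagonal, Fin.sum_univ_four]
  show x 0 * (-1 * x 0) + x 1 * (σ * x 1) + x 2 * ((1:ℝ) * x 2) + x 3 * ((1:ℝ) * x 3) = _
  ring

lemma det_eta (σ : ℝ) : (eta σ).det = -σ := by
  rw [eta, Matrix.det_diagonal]
  show (-1) * (σ * (1 * (1 * 1))) = -σ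
  ring

lemma sq1_pos (a : ℝ) (h : a ≠ 0) : 0 < a^2 := by
  rcases lt_or_gt_of_ne h with h'|h' <;> nlinarith

lemma sq2_pos (a b : ℝ) (h : ¬(a = 0 ∧ b = 0)) : 0 < a^2 + b^2 := by
  rcases eq_or_lt_of_le (by positivity : (0:ℝ) ≤ a^2 + b^2) with h'|h'
  · exfalso
    apply h
    constructor <;> [skip; skip] <;>
      · apply pow_eq_zero_iff (two_ne_zero) |>.mp
        nlinarith [sq_nonneg a, sq_nonneg b]
  · exact h'

lemma sq3_pos (a b d : ℝ) (h : ¬(a = 0 ∧ b = 0 ∧ d = 0)) : 0 < a^2 + b^2 + d^2 := by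
  rcases eq_or_lt_of_le (by positivity : (0:ℝ) ≤ a^2 + b^2 + d^2) with h'|h'
  · exfalso
    apply h
    refine ⟨?_, ?_, ?_⟩ <;>
      · apply pow_eq_zero_iff (two_ne_zero) |>.mp
        nlinarith [sq_nonneg a, sq_nonneg b, sq_nonneg d]
  · exact h'

lemma inertia_eta_one : inertia (eta 1) = (1, 3) := by
  classical
  have hH := eta_isHermitian 1
  obtain ⟨hsum, _, _⟩ := det_sign_lemma (eta 1) hH (eig_ne_of_det_ne _ hH (by rw [det_eta]; norm_num))
  have hcp : 3 ≤ (Finset.univ.filter fun i => 0 < hH.eigenvalues i).card := by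
    apply le_card_pos (eta 1) hH ![![0,1,0,0], ![0,0,1,0], ![0,0,0,1]]
    intro c hc
    have hx : ∀ k, (∑ j : Fin 3, c j • (![![0,1,0,0], ![0,0,1,0], ![0,0,0,1]] :
        Fin 3 → Fin 4 → ℝ) j) k = ![0, c 0, c 1, c 2] k := by
      intro k
      simp only [Fin.sum_univ_three]
      fin_cases k <;> simp
    rw [quad_eta]
    rw [hx 0, hx 1, hx 2, hx 3]
    have h0 : (![0, c 0, c 1, c 2] : Fin 4 → ℝ) 0 = 0 := rfl
    have h1 : (![0, c 0, c 1, c 2] : Fin 4 → ℝ) 1 = c 0 := rfl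
    have h2 : (![0, c 0, c 1, c 2] : Fin 4 → ℝ) 2 = c 1 := rfl
    have h3 : (![0, c 0, c 1, c 2] : Fin 4 → ℝ) 3 = c 2 := rfl
    rw [h0, h1, h2, h3]
    have hne : ¬(c 0 = 0 ∧ c 1 = 0 ∧ c 2 = 0) := by
      rintro ⟨e0, e1, e2⟩
      exact hc (funext fun j => by fin_cases j <;> assumption)
    have := sq3_pos (c 0) (c 1) (c 2) hne
    nlinarith [this]
  have hcn : 1 ≤ (Finset.univ.filter fun i => hH.eigenvalues i < 0).card := by
    apply le_card_neg (eta 1) hH ![![1,0,0,0]]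
    intro c hc
    have hx : ∀ k, (∑ j : Fin 1, c j • (![![1,0,0,0]] : Fin 1 → Fin 4 → ℝ) j) k
        = ![c 0, 0, 0, 0] k := by
      intro k
      simp only [Fin.sum_univ_one]
      fin_cases k <;> simp
    rw [quad_eta, hx 0, hx 1, hx 2, hx 3]
    have h0 : (![c 0, 0, 0, 0] : Fin 4 → ℝ) 0 = c 0 := rfl
    have h1 : (![c 0, 0, 0, 0] : Fin 4 → ℝ) 1 = 0 := rfl
    have h2 : (![c 0, 0, 0, 0] : Fin 4 → ℝ) 2 = 0 := rfl
    have h3 : (![c 0, 0, 0, 0] : Fin 4 → ℝ) 3 = 0 := rfl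
    rw [h0, h1, h2, h3]
    have hne : c 0 ≠ 0 := fun e0 =>
      hc (funext fun j => by fin_cases j <;> assumption)
    have := sq1_pos (c 0) hne
    nlinarith [this]
  rw [inertia, dif_pos hH]
  have : (Finset.univ.filter fun i => hH.eigenvalues i < 0).card = 1 ∧
      (Finset.univ.filter fun i => 0 < hH.eigenvalues i).card = 3 := by omega
  rw [this.1, this.2]

lemma inertia_eta_neg_one : inertia (eta (-1)) = (2, 2) := by
  classical
  have hH := eta_isHermitian (-1)
  obtain ⟨hsum, _, _⟩ := det_sign_lemma (eta (-1)) hH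
    (eig_ne_of_det_ne _ hH (by rw [det_eta]; norm_num))
  have hcp : 2 ≤ (Finset.univ.filter fun i => 0 < hH.eigenvalues i).card := by
    apply le_card_pos (eta (-1)) hH ![![0,0,1,0], ![0,0,0,1]]
    intro c hc
    have hx : ∀ k, (∑ j : Fin 2, c j • (![![0,0,1,0], ![0,0,0,1]] :
        Fin 2 → Fin 4 → ℝ) j) k = ![0, 0, c 0, c 1] k := by
      intro k
      simp only [Fin.sum_univ_two]
      fin_cases k <;> simp
    rw [quad_eta, hx 0, hx 1, hx 2, hx 3]
    have h0 : (![0, 0, c 0, c 1] : Fin 4 → ℝ) 0 = 0 := rfl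
    have h1 : (![0, 0, c 0, c 1] : Fin 4 → ℝ) 1 = 0 := rfl
    have h2 : (![0, 0, c 0, c 1] : Fin 4 → ℝ) 2 = c 0 := rfl
    have h3 : (![0, 0, c 0, c 1] : Fin 4 → ℝ) 3 = c 1 := rfl
    rw [h0, h1, h2, h3]
    have hne : ¬(c 0 = 0 ∧ c 1 = 0) := by
      rintro ⟨e0, e1⟩
      exact hc (funext fun j => by fin_cases j <;> assumption)
    have := sq2_pos (c 0) (c 1) hne
    nlinarith [this]
  have hcn : 2 ≤ (Finset.univ.filter fun i => hH.eigenvalues i < 0).card := by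
    apply le_card_neg (eta (-1)) hH ![![1,0,0,0], ![0,1,0,0]]
    intro c hc
    have hx : ∀ k, (∑ j : Fin 2, c j • (![![1,0,0,0], ![0,1,0,0]] :
        Fin 2 → Fin 4 → ℝ) j) k = ![c 0, c 1, 0, 0] k := by
      intro k
      simp only [Fin.sum_univ_two]
      fin_cases k <;> simp
    rw [quad_eta, hx 0, hx 1, hx 2, hx 3]
    have h0 : (![c 0, c 1, 0, 0] : Fin 4 → ℝ) 0 = c 0 := rfl
    have h1 : (![c 0, c 1, 0, 0] : Fin 4 → ℝ) 1 = c 1 := rfl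
    have h2 : (![c 0, c 1, 0, 0] : Fin 4 → ℝ) 2 = 0 := rfl
    have h3 : (![c 0, c 1, 0, 0] : Fin 4 → ℝ) 3 = 0 := rfl
    rw [h0, h1, h2, h3]
    have hne : ¬(c 0 = 0 ∧ c 1 = 0) := by
      rintro ⟨e0, e1⟩
      exact hc (funext fun j => by fin_cases j <;> assumption)
    have := sq2_pos (c 0) (c 1) hne
    nlinarith [this]
  rw [inertia, dif_pos hH]
  have : (Finset.univ.filter fun i => hH.eigenvalues i < 0).card = 2 ∧
      (Finset.univ.filter fun i => 0 < hH.eigenvalues i).card = 2 := by omega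
  rw [this.1, this.2]


lemma exists_matching_equiv {α : Type*} [Fintype α] [DecidableEq α]
    (p q : α → Prop) [DecidablePred p] [DecidablePred q]
    (h : Fintype.card {a // p a} = Fintype.card {a // q a}) :
    ∃ e : α ≃ α, ∀ a, p a ↔ q (e a) := by
  have h' : Fintype.card {a // ¬ p a} = Fintype.card {a // ¬ q a} := by
    rw [Fintype.card_subtype_compl, Fintype.card_subtype_compl, h]
  refine ⟨(Equiv.sumCompl p).symm.trans ((Equiv.sumCongr (Fintype.equivOfCardEq h)
    (Fintype.equivOfCardEq h')).trans (Equiv.sumCompl q)), fun a => ?_⟩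
  by_cases hpa : p a
  · simp only [Equiv.trans_apply, Equiv.sumCompl_symm_apply_of_pos hpa,
      Equiv.sumCongr_apply, Sum.map_inl, Equiv.sumCompl_apply_inl]
    exact iff_of_true hpa ((Fintype.equivOfCardEq h) ⟨a, hpa⟩).2
  · simp only [Equiv.trans_apply, Equiv.sumCompl_symm_apply_of_neg hpa,
      Equiv.sumCongr_apply, Sum.map_inr, Equiv.sumCompl_apply_inr]
    exact iff_of_false hpa (Fintype.equivOfCardEq h' ⟨a, hpa⟩).2

lemma exists_B (G : Matrix (Fin 4) (Fin 4) ℝ) (hGH : G.IsHermitian) (σ : ℝ)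
    (hσ : σ = 1 ∨ σ = -1)
    (hnz : ∀ i, hGH.eigenvalues i ≠ 0)
    (hcard : (Finset.univ.filter fun i => hGH.eigenvalues i < 0).card
        = (Finset.univ.filter fun k => (![-1,σ,1,1] : Fin 4 → ℝ) k < 0).card) :
    ∃ B : Matrix (Fin 4) (Fin 4) ℝ, B * eta σ * Bᵀ = G := by
  classical
  obtain ⟨U, hUUt, hUtU, hAeq⟩ := real_spectral G hGH
  set d := hGH.eigenvalues with hd
  set ηd : Fin 4 → ℝ := ![-1,σ,1,1] with hηd
  have hpm : ∀ k, ηd k = -1 ∨ ηd k = 1 := by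
    intro k
    fin_cases k <;> rcases hσ with h | h <;> simp [hηd, h]
  -- matching equiv
  have hcards : Fintype.card {k // ηd k < 0} = Fintype.card {m // d m < 0} := by
    rw [Fintype.card_subtype, Fintype.card_subtype, hcard]
  obtain ⟨e, he⟩ := exists_matching_equiv (fun k => ηd k < 0) (fun m => d m < 0) hcards
  set s : Fin 4 → ℝ := fun m => Real.sqrt |d m| with hs
  have hkey : ∀ k, ηd k * (s (e k))^2 = d (e k) := by
    intro k
    have hsq : (s (e k))^2 = |d (e k)| := Real.sq_sqrt (abs_nonneg _)
    rw [hsq]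
    by_cases hk : ηd k < 0
    · have h1 : d (e k) < 0 := (he k).mp hk
      have h2 : ηd k = -1 := by rcases hpm k with h | h; exact h; exfalso; rw [h] at hk; linarith
      rw [h2, abs_of_neg h1]; ring
    · have h1 : ¬ d (e k) < 0 := fun hh => hk ((he k).mpr hh)
      have h2 : ηd k = 1 := by rcases hpm k with h | h; exfalso; rw [h] at hk; exact hk (by norm_num); exact h
      have h3 : 0 < d (e k) := lt_of_le_of_ne (not_lt.mp h1) (Ne.symm (hnz _))
      rw [h2, abs_of_pos h3]; ring
  refine ⟨Matrix.of fun i k => U i (e k) * s (e k), ?_⟩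
  ext i j
  have hL : (Matrix.of (fun i k => U i (e k) * s (e k)) * eta σ
      * (Matrix.of (fun i k => U i (e k) * s (e k)))ᵀ) i j
      = ∑ k, (U i (e k) * s (e k)) * ηd k * (U j (e k) * s (e k)) := by
    rw [show eta σ = Matrix.diagonal ![-1,σ,1,1] from rfl, Matrix.mul_apply]
    refine Finset.sum_congr rfl fun k _ => ?_
    rw [Matrix.mul_diagonal]
    simp only [Matrix.transpose_apply, Matrix.of_apply]
    try ring
  rw [hL]
  have hR : G i j = ∑ m, U i m * d m * U j m := by
    conv_lhs => rw [hAeq]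
    rw [Matrix.mul_apply]
    refine Finset.sum_congr rfl fun m _ => ?_
    rw [Matrix.mul_diagonal]
    simp [Matrix.transpose_apply]
  rw [hR]
  rw [← Equiv.sum_comp e (fun m => U i m * d m * U j m)]
  refine Finset.sum_congr rfl fun k _ => ?_
  linear_combination (U i (e k) * U j (e k)) * hkey k


lemma ip_rows (σ : ℝ) (M K : Matrix (Fin 4) (Fin 4) ℝ) (i j : Fin 4) :
    ip σ (fun k => M i k) (fun k => K j k) = (M * eta σ * Kᵀ) i j := by
  rw [ip, show eta σ = Matrix.diagonal ![-1,σ,1,1] from rfl, Matrix.mul_apply, dotProduct]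
  refine Finset.sum_congr rfl fun k _ => ?_
  rw [Matrix.mul_diagonal, Matrix.mulVec_diagonal, Matrix.transpose_apply]
  ring

lemma ip_sum_left {ι : Type*} (σ : ℝ) (s : Finset ι) (f : ι → (Fin 4 → ℝ)) (Y : Fin 4 → ℝ) :
    ip σ (∑ i ∈ s, f i) Y = ∑ i ∈ s, ip σ (f i) Y := by
  simp only [ip, dotProduct, Finset.sum_apply, Finset.sum_mul]
  exact Finset.sum_comm

lemma ip_smul_left (σ c : ℝ) (X Y : Fin 4 → ℝ) : ip σ (c • X) Y = c * ip σ X Y := by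
  simp only [ip]
  rw [smul_dotProduct]
  simp

lemma ip_smul_right (σ c : ℝ) (X Y : Fin 4 → ℝ) : ip σ X (c • Y) = c * ip σ X Y := by
  simp only [ip]
  rw [Matrix.mulVec_smul, dotProduct_smul]
  simp

lemma gram_li (σ : ℝ) (G : Matrix (Fin 4) (Fin 4) ℝ) (hdet : G.det ≠ 0)
    (N : Fin 4 → (Fin 4 → ℝ)) (hN : ∀ i j, ip σ (N i) (N j) = G i j) :
    LinearIndependent ℝ N := by
  rw [Fintype.linearIndependent_iff]
  intro c hc
  have hvm : c ᵥ* G = 0 := by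
    funext j
    have : ip σ (∑ i, c i • N i) (N j) = 0 := by rw [hc]; simp [ip]
    rw [ip_sum_left] at this
    simp only [ip_smul_left, hN] at this
    simpa [Matrix.vecMul, dotProduct] using this
  intro i
  have : c = 0 := by
    have h1 : c ᵥ* (G * G⁻¹) = c := by
      rw [Matrix.mul_nonsing_inv G (Ne.isUnit hdet), Matrix.vecMul_one]
    rw [← Matrix.vecMul_vecMul, hvm, Matrix.zero_vecMul] at h1
    exact h1.symm
  rw [this]; rfl

lemma inv_diag (G : Matrix (Fin 4) (Fin 4) ℝ) (hdet : G.det ≠ 0) (i : Fin 4) :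
    G⁻¹ i i = (G.submatrix i.succAbove i.succAbove).det / G.det := by
  have hadj : G.adjugate i i = (G.submatrix i.succAbove i.succAbove).det := by
    rw [Matrix.adjugate_apply]
    rw [Matrix.det_succ_row _ i]
    rw [Finset.sum_eq_single i]
    · rw [Matrix.updateRow_self]
      simp only [Pi.single_eq_same]
      have h2 : ((-1:ℝ)) ^ ((i:ℕ) + (i:ℕ)) = 1 := Even.neg_one_pow ⟨i, rfl⟩
      rw [h2]
      have h3 : (G.updateRow i (Pi.single i 1)).submatrix i.succAbove i.succAbove
          = G.submatrix i.succAbove i.succAbove := by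
        ext a b
        simp only [Matrix.submatrix_apply]
        exact congrFun (Matrix.updateRow_ne (Fin.succAbove_ne i a)) _
      rw [h3]
      ring
    · intro j _ hj
      rw [Matrix.updateRow_self]
      rw [Pi.single_eq_of_ne hj]
      ring
    · intro h
      exact absurd (Finset.mem_univ i) h
  rw [Matrix.inv_def, Matrix.smul_apply, hadj, Ring.inverse_eq_inv']
  rw [div_eq_inv_mul]
  rfl


lemma ip_zero_left (σ : ℝ) (Y : Fin 4 → ℝ) : ip σ 0 Y = 0 := by simp [ip]

lemma ip_sum_smul (σ : ℝ) (lam : Fin 4 → ℝ) (V : Fin 4 → (Fin 4 → ℝ)) (Y : Fin 4 → ℝ) :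
    ip σ (∑ j, lam j • V j) Y = ∑ j, lam j * ip σ (V j) Y := by
  rw [ip_sum_left]
  simp only [ip_smul_left]

lemma part_c (σ : ℝ) (G : Matrix (Fin 4) (Fin 4) ℝ)
    (N V : Fin 4 → (Fin 4 → ℝ))
    (hVN0 : ∀ i j, j ≠ i → ip σ (V i) (N j) = 0)
    (hVNneg : ∀ i, ip σ (V i) (N i) < 0) :
    {X : Fin 4 → ℝ | ∀ i, ip σ X (N i) ≤ 0} =
      {X : Fin 4 → ℝ | ∃ lam : Fin 4 → ℝ, (∀ i, 0 ≤ lam i) ∧ X = ∑ i, lam i • V i} := by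
  have hcollapse : ∀ (lam : Fin 4 → ℝ) (i : Fin 4),
      ip σ (∑ j, lam j • V j) (N i) = lam i * ip σ (V i) (N i) := by
    intro lam i
    rw [ip_sum_smul]
    rw [Finset.sum_eq_single i]
    · intro j _ hj
      rw [hVN0 j i (Ne.symm hj), mul_zero]
    · intro h; exact absurd (Finset.mem_univ i) h
  have hVli : LinearIndependent ℝ V := by
    rw [Fintype.linearIndependent_iff]
    intro c hc i
    have h0 : ip σ (∑ j, c j • V j) (N i) = 0 := by rw [hc, ip_zero_left]
    rw [hcollapse] at h0
    rcases mul_eq_zero.mp h0 with h | h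
    · exact h
    · exact absurd h (ne_of_lt (hVNneg i))
  have hcard : Fintype.card (Fin 4) = Module.finrank ℝ (Fin 4 → ℝ) := by
    simp
  let B := basisOfLinearIndependentOfCardEqFinrank hVli hcard
  have hB : ∀ i, B i = V i := fun i =>
    congrFun (coe_basisOfLinearIndependentOfCardEqFinrank hVli hcard) i
  ext X
  simp only [Set.mem_setOf_eq]
  constructor
  · intro hX
    refine ⟨fun i => B.repr X i, fun i => ?_, ?_⟩
    · have hXsum : X = ∑ j, B.repr X j • V j := by
        conv_lhs => rw [← B.sum_repr X]
        refine Finset.sum_congr rfl fun j _ => by rw [hB]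
      have := hX i
      rw [hXsum, hcollapse] at this
      by_contra hneg
      push_neg at hneg
      nlinarith [hVNneg i]
    · conv_lhs => rw [← B.sum_repr X]
      refine Finset.sum_congr rfl fun j _ => by rw [hB]
  · rintro ⟨lam, hlam, rfl⟩
    intro i
    rw [hcollapse]
    exact mul_nonpos_of_nonneg_of_nonpos (hlam i) (le_of_lt (hVNneg i))


lemma part_d (σ : ℝ) (hσ : σ ≠ 0) (G : Matrix (Fin 4) (Fin 4) ℝ) (hdet : G.det ≠ 0)
    (N N' : Fin 4 → (Fin 4 → ℝ))
    (hN : ∀ i j, ip σ (N i) (N j) = G i j) (hN' : ∀ i j, ip σ (N' i) (N' j) = G i j) :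
    ∃ Λ : Matrix (Fin 4) (Fin 4) ℝ, Λᵀ * eta σ * Λ = eta σ ∧ ∀ i, N' i = Λ *ᵥ N i := by
  set M : Matrix (Fin 4) (Fin 4) ℝ := Matrix.of fun i k => N i k with hM
  set M' : Matrix (Fin 4) (Fin 4) ℝ := Matrix.of fun i k => N' i k with hM'
  have hG : M * eta σ * Mᵀ = G := by
    ext i j
    rw [← ip_rows]
    exact hN i j
  have hG' : M' * eta σ * M'ᵀ = G := by
    ext i j
    rw [← ip_rows]
    exact hN' i j
  have hdM : M.det ≠ 0 := by
    intro h
    apply hdet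
    rw [← hG, Matrix.det_mul, Matrix.det_mul, h]
    ring
  have hUdM : IsUnit M.det := Ne.isUnit hdM
  have hUdMT : IsUnit Mᵀ.det := by rw [Matrix.det_transpose]; exact hUdM
  refine ⟨(M⁻¹ * M')ᵀ, ?_, ?_⟩
  · calc ((M⁻¹ * M')ᵀ)ᵀ * eta σ * (M⁻¹ * M')ᵀ
        = M⁻¹ * (M' * eta σ * M'ᵀ) * (M⁻¹)ᵀ := by
          rw [Matrix.transpose_transpose, Matrix.transpose_mul]
          simp only [Matrix.mul_assoc]
      _ = M⁻¹ * (M * eta σ * Mᵀ) * (M⁻¹)ᵀ := by rw [hG', hG]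
      _ = (M⁻¹ * M) * (eta σ * (Mᵀ * (Mᵀ)⁻¹)) := by
          rw [Matrix.transpose_nonsing_inv]
          simp only [Matrix.mul_assoc]
      _ = eta σ := by
          rw [Matrix.nonsing_inv_mul _ hUdM, Matrix.mul_nonsing_inv _ hUdMT]
          simp
  · intro i
    funext k
    have h1 : (((M⁻¹ * M')ᵀ) *ᵥ N i) k = ∑ l, N i l * (M⁻¹ * M') l k := by
      rw [Matrix.mulVec, dotProduct]
      refine Finset.sum_congr rfl fun l _ => ?_
      rw [Matrix.transpose_apply]
      ring
    rw [h1]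
    have h2 : ∑ l, N i l * (M⁻¹ * M') l k = (M * (M⁻¹ * M')) i k := by
      rw [Matrix.mul_apply]
      rfl
    rw [h2, ← Matrix.mul_assoc, Matrix.mul_nonsing_inv _ hUdM, Matrix.one_mul]
    rfl


lemma part_b (G : Matrix (Fin 4) (Fin 4) ℝ) (hGH : G.IsHermitian) (hsymm : G.IsSymm)
    (hdet : G.det ≠ 0) (σ : ℝ) (hσpm : σ = 1 ∨ σ = -1)
    (hσdet : σ * G.det < 0)
    (hminneg : ∀ i : Fin 4, (G.submatrix i.succAbove i.succAbove).det < 0)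
    (B : Matrix (Fin 4) (Fin 4) ℝ) (hB : B * eta σ * Bᵀ = G) :
    ∃ N V : Fin 4 → (Fin 4 → ℝ), LinearIndependent ℝ N ∧
      (∀ i j, ip σ (N i) (N j) = G i j) ∧
      (∀ i, ip σ (V i) (V i) = σ) ∧
      (∀ i j, j ≠ i → ip σ (V i) (N j) = 0) ∧
      (∀ i, ip σ (V i) (N i) < 0) := by
  have hUdet : IsUnit G.det := Ne.isUnit hdet
  have hGinv1 : G⁻¹ * G = 1 := Matrix.nonsing_inv_mul _ hUdet
  have hGinv2 : G * G⁻¹ = 1 := Matrix.mul_nonsing_inv _ hUdet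
  have hGinvT : (G⁻¹)ᵀ = G⁻¹ := by
    rw [Matrix.transpose_nonsing_inv, hsymm.eq]
  set N : Fin 4 → (Fin 4 → ℝ) := fun i => fun k => B i k with hN
  have hNip : ∀ i j, ip σ (N i) (N j) = G i j := by
    intro i j
    rw [hN, ip_rows, hB]
  set W : Matrix (Fin 4) (Fin 4) ℝ := G⁻¹ * B with hW
  have hWN : W * eta σ * Bᵀ = 1 := by
    rw [hW, Matrix.mul_assoc, Matrix.mul_assoc, ← Matrix.mul_assoc B, hB, hGinv1]
  have hWW : W * eta σ * Wᵀ = G⁻¹ := by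
    have : Wᵀ = Bᵀ * G⁻¹ := by rw [hW, Matrix.transpose_mul, hGinvT]
    rw [this, ← Matrix.mul_assoc, hWN, Matrix.one_mul]
  -- sign of the diagonal of the inverse
  have hdiag : ∀ i, 0 < σ * G⁻¹ i i := by
    intro i
    rw [inv_diag G hdet i]
    rcases hσpm with h | h
    · rw [h] at hσdet ⊢
      rw [one_mul] at hσdet ⊢
      exact div_pos_of_neg_of_neg (hminneg i) hσdet
    · rw [h] at hσdet ⊢
      have hdpos : 0 < G.det := by nlinarith
      have := div_neg_of_neg_of_pos (hminneg i) hdpos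
      nlinarith
  have hσsq : σ * σ = 1 := by rcases hσpm with h | h <;> rw [h] <;> norm_num
  set t : Fin 4 → ℝ := fun i => Real.sqrt (σ * G⁻¹ i i) with ht
  have htpos : ∀ i, 0 < t i := fun i => Real.sqrt_pos.mpr (hdiag i)
  have htsq : ∀ i, t i ^ 2 = σ * G⁻¹ i i := fun i => Real.sq_sqrt (le_of_lt (hdiag i))
  set V : Fin 4 → (Fin 4 → ℝ) := fun i => (-(t i)⁻¹) • (fun k => W i k) with hV
  have hipWN : ∀ i j, ip σ (fun k => W i k) (N j) = (1 : Matrix (Fin 4) (Fin 4) ℝ) i j := by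
    intro i j
    rw [hN, ip_rows, hWN]
  have hipWW : ∀ i j, ip σ (fun k => W i k) (fun k => W j k) = G⁻¹ i j := by
    intro i j
    rw [ip_rows, hWW]
  refine ⟨N, V, gram_li σ G hdet N hNip, hNip, ?_, ?_, ?_⟩
  · intro i
    rw [hV, ip_smul_left, ip_smul_right, hipWW]
    have h2 : -(t i)⁻¹ * (-(t i)⁻¹ * G⁻¹ i i) = (t i ^ 2)⁻¹ * G⁻¹ i i := by
      rw [pow_two, mul_inv]
      ring
    have hne : G⁻¹ i i ≠ 0 := by
      intro h
      have := hdiag i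
      rw [h, mul_zero] at this
      exact lt_irrefl 0 this
    rw [h2, htsq i, mul_inv, mul_assoc, inv_mul_cancel₀ hne, mul_one]
    rcases hσpm with h | h <;> rw [h] <;> norm_num
  · intro i j hji
    rw [hV, ip_smul_left, hipWN]
    rw [Matrix.one_apply_ne (Ne.symm hji)]
    ring
  · intro i
    rw [hV, ip_smul_left, hipWN, Matrix.one_apply_eq]
    have := htpos i
    have h3 : 0 < (t i)⁻¹ := inv_pos.mpr this
    nlinarith


lemma pat1 : (Finset.univ.filter fun k => (![-1,(1:ℝ),1,1] : Fin 4 → ℝ) k < 0).card = 1 := by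
  have h : (Finset.univ.filter fun k => (![-1,(1:ℝ),1,1] : Fin 4 → ℝ) k < 0) = {0} := by
    ext k
    simp only [Finset.mem_filter, Finset.mem_univ, true_and, Finset.mem_singleton]
    fin_cases k <;> simp <;> norm_num
  rw [h]; rfl
lemma pat2 : (Finset.univ.filter fun k => (![-1,(-1:ℝ),1,1] : Fin 4 → ℝ) k < 0).card = 2 := by
  have h : (Finset.univ.filter fun k => (![-1,(-1:ℝ),1,1] : Fin 4 → ℝ) k < 0) = {0, 1} := by
    ext k
    simp only [Finset.mem_filter, Finset.mem_univ, true_and, Finset.mem_insert,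
      Finset.mem_singleton]
    fin_cases k <;> simp <;> norm_num
  rw [h]; rfl


lemma minor_det_neg (G : Matrix (Fin 4) (Fin 4) ℝ) (hGH : G.IsHermitian)
    (hmin : ∀ i : Fin 4, inertia (G.submatrix i.succAbove i.succAbove) = (1, 2)) :
    ∀ i : Fin 4, (G.submatrix i.succAbove i.succAbove).det < 0 := by
  intro i
  have hMH : (G.submatrix i.succAbove i.succAbove).IsHermitian := hGH.submatrix _
  have h := hmin i
  rw [inertia, dif_pos hMH] at h
  have hcn := ((Prod.mk.injEq _ _ _ _).mp h).1
  have hcp := ((Prod.mk.injEq _ _ _ _).mp h).2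
  have hnz := eig_ne_of_card _ hMH (by rw [hcn, hcp])
  obtain ⟨-, -, hodd⟩ := det_sign_lemma _ hMH hnz
  exact hodd (by rw [hcn])


/-- Reconstruction from a nondegenerate Gram matrix with Lorentzian vertex minors:
with `σ := -sgn(det G)`, (a) `In(G) = In(η_σ)`; (b) there exist linearly independent normals
`N_i` with Gram matrix `G`, together with vertices `V_i` of norm `σ` orthogonal to the other
three normals and with negative support numbers; (c) for all such data the half-space
intersection is the simplicial cone on the `V_i`; (d) any two such normal quadruples differ by
a single `Λ` preserving `η_σ`. -/
theorem gram_reconstruction_theorem (G : Matrix (Fin 4) (Fin 4) ℝ)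
    (hsymm : G.IsSymm) (hdet : G.det ≠ 0)
    (hmin : ∀ i : Fin 4, inertia (G.submatrix i.succAbove i.succAbove) = (1, 2)) :
    let σ : ℝ := -Real.sign G.det
    (inertia G = inertia (eta σ)) ∧
    (∃ N V : Fin 4 → (Fin 4 → ℝ), LinearIndependent ℝ N ∧
      (∀ i j, ip σ (N i) (N j) = G i j) ∧
      (∀ i, ip σ (V i) (V i) = σ) ∧
      (∀ i j, j ≠ i → ip σ (V i) (N j) = 0) ∧
      (∀ i, ip σ (V i) (N i) < 0)) ∧
    (∀ N V : Fin 4 → (Fin 4 → ℝ), LinearIndependent ℝ N →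
      (∀ i j, ip σ (N i) (N j) = G i j) →
      (∀ i, ip σ (V i) (V i) = σ) →
      (∀ i j, j ≠ i → ip σ (V i) (N j) = 0) →
      (∀ i, ip σ (V i) (N i) < 0) →
      {X : Fin 4 → ℝ | ∀ i, ip σ X (N i) ≤ 0} =
        {X : Fin 4 → ℝ | ∃ lam : Fin 4 → ℝ, (∀ i, 0 ≤ lam i) ∧ X = ∑ i, lam i • V i}) ∧
    (∀ N N' : Fin 4 → (Fin 4 → ℝ),
      LinearIndependent ℝ N → (∀ i j, ip σ (N i) (N j) = G i j) →
      LinearIndependent ℝ N' → (∀ i j, ip σ (N' i) (N' j) = G i j) →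
      ∃ Λ : Matrix (Fin 4) (Fin 4) ℝ, Λᵀ * eta σ * Λ = eta σ ∧ ∀ i, N' i = Λ *ᵥ N i) := by
  classical
  intro σ
  have hGH : G.IsHermitian := by
    rw [Matrix.IsHermitian, Matrix.conjTranspose_eq_transpose_of_trivial]
    exact hsymm
  have hminneg := minor_det_neg G hGH hmin
  obtain ⟨h13, h22⟩ := inertia_G G hGH hdet hmin
  have hd0 : G.det < 0 ∨ 0 < G.det := lt_or_gt_of_ne hdet
  have hσpm : σ = 1 ∨ σ = -1 := by
    rcases hd0 with h | h
    · left; show -Real.sign G.det = 1; rw [Real.sign_of_neg h]; norm_num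
    · right; show -Real.sign G.det = -1; rw [Real.sign_of_pos h]
  have hσdet : σ * G.det < 0 := by
    rcases hd0 with h | h
    · have hσ1 : σ = 1 := by show -Real.sign G.det = 1; rw [Real.sign_of_neg h]; norm_num
      rw [hσ1]; linarith
    · have hσ1 : σ = -1 := by show -Real.sign G.det = -1; rw [Real.sign_of_pos h]
      rw [hσ1]; linarith
  refine ⟨?_, ?_, ?_, ?_⟩
  · rcases hd0 with h | h
    · have hσ1 : σ = 1 := by show -Real.sign G.det = 1; rw [Real.sign_of_neg h]; norm_num
      rw [hσ1, inertia_eta_one, h13 h]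
    · have hσ1 : σ = -1 := by show -Real.sign G.det = -1; rw [Real.sign_of_pos h]
      rw [hσ1, inertia_eta_neg_one, h22 h]
  · have hB : ∃ B : Matrix (Fin 4) (Fin 4) ℝ, B * eta σ * Bᵀ = G := by
      rcases hd0 with h | h
      · have hσ1 : σ = 1 := by show -Real.sign G.det = 1; rw [Real.sign_of_neg h]; norm_num
        have hIG := h13 h
        rw [inertia, dif_pos hGH] at hIG
        refine exists_B G hGH σ hσpm (eig_ne_of_det_ne G hGH hdet) ?_
        rw [((Prod.mk.injEq _ _ _ _).mp hIG).1, hσ1]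
        exact pat1.symm
      · have hσ1 : σ = -1 := by show -Real.sign G.det = -1; rw [Real.sign_of_pos h]
        have hIG := h22 h
        rw [inertia, dif_pos hGH] at hIG
        refine exists_B G hGH σ hσpm (eig_ne_of_det_ne G hGH hdet) ?_
        rw [((Prod.mk.injEq _ _ _ _).mp hIG).1, hσ1]
        exact pat2.symm
    obtain ⟨B, hB⟩ := hB
    exact part_b G hGH hsymm hdet σ hσpm hσdet hminneg B hB
  · intro N V hli hN hV hVN0 hVNneg
    exact part_c σ G N V hVN0 hVNneg
  · intro N N' hli hN hli' hN'
    exact part_d σ (by rcases hσpm with h | h <;> rw [h] <;> norm_num) G hdet N N' hN hN'
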